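/- Let d ∈ D, let S be an orthogonal collection with ⟨S⟩ functorially finite, and let s_d → d → z_d → Σs_d be the decomposition triangle with respect to the torsion pair (⟨S⟩, S^⊥), where s_d → d is a minimal right ⟨S⟩-approximation. Then Hom(S, s_d) → Hom(S, d) is an isomorphism. If moreover w ≥ 1 and S is an 𝕊_{-w}-subcategory, then Hom(Σ^{w-1}z_d, S) → Hom(Σ^{w-1}d, S) is a monomorphism, and if Hom(d, Σ^{1-w}S) = 0 then Hom(z_d, Σ^{1-w}S) = 0. -/

import Mathlib

open CategoryTheory CategoryTheory.Limits CategoryTheory.Pretriangulated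

universe v u u₂

namespace SMSPaper

/-- Serre duality data on a `k`-linear category, encoded by trace maps. -/
structure SerreData (k : Type u₂) [Field k] (D : Type u) [Category.{v} D] [Preadditive D]
    [Linear k D] where
  F : D ⥤ D
  isEquiv : F.IsEquivalence
  tr : (x : D) → (x ⟶ F.obj x) →ₗ[k] k
  comm : ∀ {x y : D} (f : x ⟶ y) (g : y ⟶ F.obj x), tr x (f ≫ g) = tr y (g ≫ F.map f)
  nondeg₁ : ∀ {x y : D} (f : x ⟶ y), (∀ g : y ⟶ F.obj x, tr x (f ≫ g) = 0) → f = 0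
  nondeg₂ : ∀ {x y : D} (g : y ⟶ F.obj x), (∀ f : x ⟶ y, tr x (f ≫ g) = 0) → g = 0

variable {C : Type u} [Category.{v} C] [Preadditive C] [HasZeroObject C]
  [HasShift C ℤ] [∀ n : ℤ, (shiftFunctor C n).Additive] [Pretriangulated C]

/-- `f : x ⟶ d` is a right `X`-approximation of `d`. -/
def IsRightApprox (X : Set C) {x d : C} (f : x ⟶ d) : Prop :=
  x ∈ X ∧ ∀ s ∈ X, ∀ g : s ⟶ d, ∃ h : s ⟶ x, h ≫ f = g

/-- `f : d ⟶ x` is a left `X`-approximation of `d`. -/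
def IsLeftApprox (X : Set C) {d x : C} (f : d ⟶ x) : Prop :=
  x ∈ X ∧ ∀ s ∈ X, ∀ g : d ⟶ s, ∃ h : x ⟶ s, f ≫ h = g

def RightMinimal {x d : C} (f : x ⟶ d) : Prop :=
  ∀ g : x ⟶ x, g ≫ f = f → IsIso g

def LeftMinimal {d x : C} (f : d ⟶ x) : Prop :=
  ∀ g : x ⟶ x, f ≫ g = f → IsIso g

def IsMinimalRightApprox (X : Set C) {x d : C} (f : x ⟶ d) : Prop :=
  IsRightApprox X f ∧ RightMinimal f

def IsMinimalLeftApprox (X : Set C) {d x : C} (f : d ⟶ x) : Prop :=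
  IsLeftApprox X f ∧ LeftMinimal f

def ContravariantlyFinite (X : Set C) : Prop :=
  ∀ d : C, ∃ (x : C) (f : x ⟶ d), IsRightApprox X f

def CovariantlyFinite (X : Set C) : Prop :=
  ∀ d : C, ∃ (x : C) (f : d ⟶ x), IsLeftApprox X f

def FunctoriallyFinite (X : Set C) : Prop :=
  ContravariantlyFinite X ∧ CovariantlyFinite X

/-- `X * Y`: objects arising as extensions of an object of `Y` by an object of `X`. -/
def extStar (X Y : Set C) : Set C :=
  {d | ∃ (x y : C) (f : x ⟶ d) (g : d ⟶ y) (h : y ⟶ x⟦(1 : ℤ)⟧),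
    (Triangle.mk f g h ∈ distTriang C) ∧ x ∈ X ∧ y ∈ Y}

def ExtClosed (X : Set C) : Prop := extStar X X ⊆ X

/-- extension closure: smallest extension-closed subcategory containing `X`. -/
def extClosure (X : Set C) : Set C := ⋂₀ {T : Set C | X ⊆ T ∧ ExtClosed T}

/-- closure under direct summands. -/
def sumClosure (X : Set C) : Set C :=
  {d | ∃ x ∈ X, ∃ (i : d ⟶ x) (r : x ⟶ d), i ≫ r = 𝟙 d}

/-- `Sn S n` is `(S)_{n+1}` of the paper: `(S)_1 = S`, `(S)_{n+1} = (S * (S)_n)^⊕`. -/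
def Sn (S : Set C) : ℕ → Set C
  | 0 => S
  | n + 1 => sumClosure (extStar S (Sn S n))

def shiftSet (i : ℤ) (S : Set C) : Set C :=
  {d | ∃ s ∈ S, Nonempty (d ≅ s⟦i⟧)}

/-- `S ∪ Σ⁻¹S ∪ ⋯ ∪ Σ^{1-w}S`. -/
def shiftUnion (w : ℕ) (S : Set C) : Set C :=
  {d | ∃ i : ℕ, i < w ∧ d ∈ shiftSet (-(i : ℤ)) S}

/-- `starChain S n = ⟨S⟩ * Σ⁻¹⟨S⟩ * ⋯ * Σ^{-n}⟨S⟩`. -/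
def starChain (S : Set C) : ℕ → Set C
  | 0 => extClosure S
  | n + 1 => extStar (starChain S n) (shiftSet (-((n : ℤ) + 1)) (extClosure S))

def rightPerp (S : Set C) : Set C := {d | ∀ s ∈ S, ∀ f : s ⟶ d, f = 0}

def leftPerp (S : Set C) : Set C := {d | ∀ s ∈ S, ∀ f : d ⟶ s, f = 0}

/-- `S^{⊥_w} = {d : Hom(Σ^i S, d) = 0 for 0 ≤ i ≤ w}`. -/
def perpW (w : ℕ) (S : Set C) : Set C :=
  {d | ∀ i : ℕ, i ≤ w → ∀ s ∈ S, ∀ f : s⟦(i : ℤ)⟧ ⟶ d, f = 0}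

/-- `^{⊥_w}S = {d : Hom(d, Σ^{-i} S) = 0 for 0 ≤ i ≤ w}`. -/
def wPerp (w : ℕ) (S : Set C) : Set C :=
  {d | ∀ i : ℕ, i ≤ w → ∀ s ∈ S, ∀ f : d ⟶ s⟦(-(i : ℤ))⟧, f = 0}

def Indec (x : C) : Prop :=
  ¬ IsZero x ∧ ∀ e : x ⟶ x, e ≫ e = e → e = 0 ∨ e = 𝟙 x

/-- `(X, Y)` is an `S`-mutation pair. -/
def IsMutationPair (S X Y : Set C) : Prop :=
  X = leftPerp S ∩ rightPerp S ∩ leftPerp (shiftSet (-1) S) ∩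
      shiftSet (-1) (extStar (extClosure S) Y) ∧
  Y = leftPerp S ∩ rightPerp S ∩ rightPerp (shiftSet 1 S) ∩
      shiftSet 1 (extStar X (extClosure S))

/-- `r` is the right mutation of `d` with respect to `S`. -/
def IsRightMutation (S : Set C) (d r : C) : Prop :=
  ∃ (s : C) (α : s ⟶ d⟦(1 : ℤ)⟧) (β : d⟦(1 : ℤ)⟧ ⟶ r) (γ : r ⟶ s⟦(1 : ℤ)⟧),
    (Triangle.mk α β γ ∈ distTriang C) ∧ IsMinimalRightApprox (extClosure S) α

/-- `l` is the left mutation of `d` with respect to `S`. -/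
def IsLeftMutation (S : Set C) (d l : C) : Prop :=
  ∃ (s : C) (β : l ⟶ d⟦(-1 : ℤ)⟧) (α : d⟦(-1 : ℤ)⟧ ⟶ s) (γ : s ⟶ l⟦(1 : ℤ)⟧),
    (Triangle.mk β α γ ∈ distTriang C) ∧ IsMinimalLeftApprox (extClosure S) α

/-- the extension closure of `R` computed inside the triangulated category `Z`,
whose triangles `x → z → y → x⟨1⟩` come from a cone `c` of `x → z` in `D` together
with a minimal right `⟨S⟩`-approximation triangle `s → c → y → Σs`. -/
inductive zExtClosure (S Z R : Set C) : C → Prop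
  | of (r : C) (hr : r ∈ R) : zExtClosure S Z R r
  | ext (x z y c s : C) (f : x ⟶ z) (g₁ : z ⟶ c) (h₁ : c ⟶ x⟦(1 : ℤ)⟧)
      (α : s ⟶ c) (β : c ⟶ y) (γ : y ⟶ s⟦(1 : ℤ)⟧)
      (hT : Triangle.mk f g₁ h₁ ∈ distTriang C)
      (hT' : Triangle.mk α β γ ∈ distTriang C)
      (hmin : IsMinimalRightApprox (extClosure S) α)
      (hz : z ∈ Z)
      (hx : zExtClosure S Z R x) (hy : zExtClosure S Z R y) :
      zExtClosure S Z R z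

variable (k : Type u₂) [Field k] [Linear k C]

/-- orthogonal collection: `dim Hom(x, y) = δ_{x,y}`. -/
def IsOrthogonalCollection (S : Set C) : Prop :=
  (∀ x ∈ S, Module.finrank k (x ⟶ x) = 1) ∧
  ∀ x ∈ S, ∀ y ∈ S, x ≠ y → ∀ f : x ⟶ y, f = 0

/-- `w`-orthogonal collection. -/
def IsWOrthogonal (w : ℕ) (S : Set C) : Prop :=
  IsOrthogonalCollection k S ∧
  ∀ i : ℕ, 1 ≤ i → i ≤ w - 1 → ∀ x ∈ S, ∀ y ∈ S, ∀ f : x⟦(i : ℤ)⟧ ⟶ y, f = 0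

/-- `w`-simple-minded system. -/
def IsWSMS (w : ℕ) (S : Set C) : Prop :=
  IsWOrthogonal k w S ∧ ∀ d : C, d ∈ sumClosure (extClosure (shiftUnion w S))

def IsRightRiedtmann (w : ℕ) (S : Set C) : Prop :=
  IsWOrthogonal k w S ∧
  ∀ d : C, (∀ i : ℕ, i < w → ∀ s ∈ S, ∀ f : d⟦(i : ℤ)⟧ ⟶ s, f = 0) → IsZero d

def IsLeftRiedtmann (w : ℕ) (S : Set C) : Prop :=
  IsWOrthogonal k w S ∧
  ∀ d : C, (∀ i : ℕ, i < w → ∀ s ∈ S, ∀ f : s⟦(i : ℤ)⟧ ⟶ d, f = 0) → IsZero d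

/-- `S` is an `𝕊_w`-subcategory (`𝕊_w = 𝕊 Σ^{-w}`). -/
def IsSwSubcat (SD : SerreData k C) (w : ℤ) (S : Set C) : Prop :=
  ∀ x : C, x ∈ S ↔ ∃ s ∈ S, Nonempty (x ≅ SD.F.obj (s⟦-w⟧))

/-- the universal map `z → 𝕊z`, corresponding to the trace functional on `End(z)`. -/
def IsUniversalMap (SD : SerreData k C) (z : C) (h : z ⟶ SD.F.obj z) : Prop :=
  SD.tr z h = 1 ∧ ∀ f : z ⟶ z, ¬ IsIso f → SD.tr z (f ≫ h) = 0


section Auxiliary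

variable {k}

lemma subset_extClosure (S : Set C) : S ⊆ extClosure S :=
  fun _x hx => Set.mem_sInter.2 fun _T hT => hT.1 hx

lemma mem_of_extClosure {S : Set C} {x : C} (hx : x ∈ extClosure S) {T : Set C}
    (h1 : S ⊆ T) (h2 : ExtClosed T) : x ∈ T :=
  Set.mem_sInter.1 hx T ⟨h1, h2⟩

lemma extClosed_extClosure (S : Set C) : ExtClosed (extClosure S) := by
  rintro d ⟨a, b, f', g', h', hT, ha, hb⟩
  refine Set.mem_sInter.2 fun T hT' => ?_
  exact hT'.2 ⟨a, b, f', g', h', hT, Set.mem_sInter.1 ha T hT', Set.mem_sInter.1 hb T hT'⟩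

/-- Torsion-pair vanishing: any map from an object of `⟨S⟩` to an object of `S^⊥` is zero. -/
lemma perp_vanish {S : Set C} {z : C} (hz : z ∈ rightPerp S) :
    ∀ x ∈ extClosure S, ∀ φ : x ⟶ z, φ = 0 := by
  intro x hx
  exact mem_of_extClosure (T := {y : C | ∀ φ : y ⟶ z, φ = 0}) hx
    (fun s hs φ => hz s hs φ)
    (by
      rintro d ⟨a, b, f', g', h', hT, ha, hb⟩ φ
      obtain ⟨ψ, hψ⟩ : ∃ ψ : b ⟶ z, φ = g' ≫ ψ := Triangle.yoneda_exact₂ _ hT φ (ha _)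
      rw [hψ, hb ψ, comp_zero])

lemma isIso_of_ne_zero {s : C} (h1 : Module.finrank k (s ⟶ s) = 1)
    {u : s ⟶ s} (hu : u ≠ 0) : IsIso u := by
  have hne : (𝟙 s : s ⟶ s) ≠ 0 := by
    intro h
    have hz : ∀ v : s ⟶ s, v = 0 := fun v => by rw [← Category.comp_id v, h, comp_zero]
    have : Subsingleton (s ⟶ s) := ⟨fun a b => by rw [hz a, hz b]⟩
    rw [Module.finrank_zero_of_subsingleton] at h1
    omega
  obtain ⟨c, hc⟩ := (finrank_eq_one_iff_of_nonzero' (𝟙 s) hne).1 h1 u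
  have hc0 : c ≠ 0 := by rintro rfl; rw [← hc] at hu; simp at hu
  rw [← hc]
  exact ⟨⟨c⁻¹ • 𝟙 s, by simp [smul_smul]; rw [inv_mul_cancel₀ hc0, one_smul],
    by simp [smul_smul]; rw [mul_inv_cancel₀ hc0, one_smul]⟩⟩

/-- The key structural lemma: if `u : s ⟶ x` is a nonzero map from a member of the
orthogonal collection `S` to an object of `⟨S⟩`, then any map `s⟦1⟧ ⟶ z` with
`z ∈ S^⊥` factors through `u⟦1⟧`. -/
lemma good_factor {S : Set C} (hS : IsOrthogonalCollection k S)
    {z : C} (hz : z ∈ rightPerp S) {s : C} (hs : s ∈ S) :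
    ∀ x ∈ extClosure S, ∀ u : s ⟶ x, u ≠ 0 →
      ∀ n : (s⟦(1:ℤ)⟧ : C) ⟶ z, ∃ m : (x⟦(1:ℤ)⟧ : C) ⟶ z, n = u⟦(1:ℤ)⟧' ≫ m := by
  intro x hx
  have hmem : x ∈ extClosure S ∩ {y : C | ∀ u : s ⟶ y, u ≠ 0 →
      ∀ n : (s⟦(1:ℤ)⟧ : C) ⟶ z, ∃ m : (y⟦(1:ℤ)⟧ : C) ⟶ z, n = u⟦(1:ℤ)⟧' ≫ m} := by
    refine mem_of_extClosure hx ?_ ?_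
    · -- S is contained in the set
      intro s' hs'
      refine ⟨subset_extClosure S hs', fun u hu n => ?_⟩
      by_cases hss : s = s'
      · subst hss
        have : IsIso u := isIso_of_ne_zero (hS.1 s hs) hu
        have : IsIso (u⟦(1:ℤ)⟧') := inferInstance
        exact ⟨inv (u⟦(1:ℤ)⟧') ≫ n, by rw [← Category.assoc, IsIso.hom_inv_id, Category.id_comp]⟩
      · exact absurd (hS.2 s hs s' hs' hss u) hu
    · -- the set is extension-closed
      rintro y ⟨a, b, ia, pa, del, hT, ⟨haE, haG⟩, ⟨hbE, hbG⟩⟩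
      refine ⟨extClosed_extClosure S ⟨a, b, ia, pa, del, hT, haE, hbE⟩, ?_⟩
      intro u hu n
      by_cases hub : u ≫ pa = 0
      · -- `u` factors through `a`
        obtain ⟨u', hu'⟩ : ∃ u' : s ⟶ a, u = u' ≫ ia := Triangle.coyoneda_exact₂ _ hT u hub
        have hu'0 : u' ≠ 0 := fun h0 => hu (by rw [hu', h0, zero_comp])
        obtain ⟨ma, hma⟩ := haG u' hu'0 n
        have hdel : del ≫ ma = 0 := perp_vanish hz b hbE _
        obtain ⟨mb, hmb⟩ : ∃ mb : (y⟦(1:ℤ)⟧ : C) ⟶ z, ma = (-(ia⟦(1:ℤ)⟧')) ≫ mb := by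
          obtain ⟨g0, hg0⟩ := Triangle.yoneda_exact₃ _ (rot_of_distTriang _ hT) ma hdel
          exact ⟨g0, hg0⟩
        refine ⟨-mb, ?_⟩
        rw [hma, hmb, hu']
        rw [Functor.map_comp]
        simp only [Preadditive.comp_neg, Preadditive.neg_comp, Category.assoc]
      · -- `u ≫ pa` is a nonzero map to `b`
        obtain ⟨mb, hmb⟩ := hbG (u ≫ pa) hub n
        refine ⟨pa⟦(1:ℤ)⟧' ≫ mb, ?_⟩
        rw [hmb, Functor.map_comp, Category.assoc]
  exact hmem.2

/-- Injectivity: a map `s ⟶ s_d` killed by the minimal right approximation is zero. -/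
lemma key_inj {S : Set C} (hS : IsOrthogonalCollection k S)
    {sd d zd : C} {f : sd ⟶ d} {g : d ⟶ zd} {h : zd ⟶ sd⟦(1 : ℤ)⟧}
    (hT : Triangle.mk f g h ∈ distTriang C)
    (hf : IsMinimalRightApprox (extClosure S) f)
    (hzd : zd ∈ rightPerp S)
    {s : C} (hs : s ∈ S) (u : s ⟶ sd) (huf : u ≫ f = 0) : u = 0 := by
  by_cases hu : u = 0
  · exact hu
  · obtain ⟨c₀, π₀, δ₀, hT₀⟩ := Pretriangulated.distinguished_cocone_triangle u
    have z12 : u ≫ π₀ = 0 := comp_distTriang_mor_zero₁₂ _ hT₀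
    have z31 : δ₀ ≫ u⟦(1:ℤ)⟧' = 0 := comp_distTriang_mor_zero₃₁ _ hT₀
    obtain ⟨f₁, hf₁⟩ : ∃ f₁ : c₀ ⟶ d, f = π₀ ≫ f₁ := Triangle.yoneda_exact₂ _ hT₀ f huf
    have hf₁' : f = π₀ ≫ f₁ := hf₁
    have h2 : π₀ ≫ (f₁ ≫ g) = 0 := by
      rw [← Category.assoc, ← hf₁']
      exact comp_distTriang_mor_zero₁₂ _ hT
    obtain ⟨tb, htb⟩ : ∃ tb : (s⟦(1:ℤ)⟧ : C) ⟶ zd, f₁ ≫ g = δ₀ ≫ tb := Triangle.yoneda_exact₃ _ hT₀ (f₁ ≫ g) h2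
    have htb' : f₁ ≫ g = δ₀ ≫ tb := htb
    obtain ⟨mh, hmh⟩ := good_factor hS hzd hs sd hf.1.1 u hu tb
    have h3 : f₁ ≫ g = 0 := by
      rw [htb', hmh, ← Category.assoc, z31, zero_comp]
    obtain ⟨j, hj⟩ : ∃ j : c₀ ⟶ sd, f₁ = j ≫ f := Triangle.coyoneda_exact₂ _ hT f₁ h3
    have hj' : f₁ = j ≫ f := hj
    have h4 : (π₀ ≫ j) ≫ f = f := by
      rw [Category.assoc, ← hj', ← hf₁']
    have h5 : IsIso (π₀ ≫ j) := hf.2 _ h4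
    have h6 : u ≫ (π₀ ≫ j) = 0 := by
      rw [← Category.assoc, z12, zero_comp]
    exact absurd (by
      rw [← Category.comp_id u, ← IsIso.hom_inv_id (π₀ ≫ j), ← Category.assoc, h6, zero_comp]) hu

lemma cancel_shift {X Y Z : C} (a : ℤ) (φ : (X⟦a⟧ : C) ⟶ (Y⟦a⟧ : C)) (χ : Y ⟶ Z)
    (hφ : φ ≫ χ⟦a⟧' = 0) (hker : ∀ q : X ⟶ Y, q ≫ χ = 0 → q = 0) : φ = 0 := by
  obtain ⟨q, rfl⟩ := (shiftFunctor C a).map_surjective φ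
  rw [← Functor.map_comp] at hφ
  have hq : q ≫ χ = 0 := by
    apply (shiftFunctor C a).map_injective
    rw [hφ, Functor.map_zero]
  rw [hker q hq, Functor.map_zero]

lemma part2_inj {S : Set C} (hS : IsOrthogonalCollection k S)
    {sd d zd : C} {f : sd ⟶ d} {g : d ⟶ zd} {h : zd ⟶ sd⟦(1 : ℤ)⟧}
    (hT : Triangle.mk f g h ∈ distTriang C)
    (hf : IsMinimalRightApprox (extClosure S) f)
    (hzd : zd ∈ rightPerp S)
    (SD : SerreData k C) (w : ℕ) (hsw : IsSwSubcat k SD (-(w : ℤ)) S)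
    {s : C} (hs : s ∈ S) (u : (zd⟦(w : ℤ) - 1⟧ : C) ⟶ s)
    (hu : g⟦(w : ℤ) - 1⟧' ≫ u = 0) : u = 0 := by
  obtain ⟨t, ht, ⟨σ⟩⟩ := (hsw s).1 hs
  have hT' : (Triangle.shiftFunctor C ((w : ℤ) - 1)).obj (Triangle.mk f g h) ∈ distTriang C :=
    Triangle.shift_distinguished _ hT _
  have hm2 : ((Triangle.shiftFunctor C ((w : ℤ) - 1)).obj (Triangle.mk f g h)).mor₂ ≫ u = 0 := by
    have e : ((Triangle.shiftFunctor C ((w : ℤ) - 1)).obj (Triangle.mk f g h)).mor₂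
        = ((w : ℤ) - 1).negOnePow • g⟦(w : ℤ) - 1⟧' := rfl
    exact (show (((w : ℤ) - 1).negOnePow • g⟦(w : ℤ) - 1⟧') ≫ u = 0 by rw [Linear.units_smul_comp, hu, smul_zero])
  obtain ⟨v, hv⟩ := Triangle.yoneda_exact₃ _ hT' u hm2
  have hz31 : h ≫ f⟦(1 : ℤ)⟧' = 0 := comp_distTriang_mor_zero₃₁ _ hT
  set A := shiftFunctorAdd' C 1 ((w : ℤ) - 1) (-(-(w : ℤ))) (by omega) with hA
  have hkey : ∀ ρ : (t⟦-(-(w : ℤ))⟧ : C) ⟶ (zd⟦(w : ℤ) - 1⟧ : C), ρ ≫ u = 0 := by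
    intro ρ
    have hψ : ρ ≫ h⟦(w : ℤ) - 1⟧' = 0 := by
      have hψ' : A.inv.app t ≫ (ρ ≫ h⟦(w : ℤ) - 1⟧') = 0 := by
        refine cancel_shift ((w : ℤ) - 1) _ (f⟦(1 : ℤ)⟧') ?_ ?_
        · rw [Category.assoc, Category.assoc, ← Functor.map_comp, hz31,
            Functor.map_zero, comp_zero, comp_zero]
        · intro q₁ hq₁
          refine cancel_shift (1 : ℤ) q₁ f hq₁ ?_
          intro q hq
          exact key_inj hS hT hf hzd ht q hq
      have := congrArg (fun x => A.hom.app t ≫ x) hψ'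
      simpa using this
    rw [show ρ ≫ u = (ρ ≫ ((Triangle.shiftFunctor C ((w : ℤ) - 1)).obj (Triangle.mk f g h)).mor₃) ≫ v from (congrArg (ρ ≫ ·) hv).trans (Category.assoc _ _ _).symm]
    have hρ3 : ρ ≫ ((Triangle.shiftFunctor C ((w : ℤ) - 1)).obj (Triangle.mk f g h)).mor₃ = 0 := by
      have e : ((Triangle.shiftFunctor C ((w : ℤ) - 1)).obj (Triangle.mk f g h)).mor₃
          = ((w : ℤ) - 1).negOnePow •
            (h⟦(w : ℤ) - 1⟧' ≫ (shiftFunctorComm C 1 ((w : ℤ) - 1)).hom.app sd) := rfl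
      exact (show ρ ≫ (((w : ℤ) - 1).negOnePow • (h⟦(w : ℤ) - 1⟧' ≫ (shiftFunctorComm C 1 ((w : ℤ) - 1)).hom.app sd)) = 0 by rw [Linear.comp_units_smul, ← Category.assoc, hψ, zero_comp, smul_zero])
    rw [hρ3, zero_comp]
  have h0 : u ≫ σ.hom = 0 := by
    apply SD.nondeg₂
    intro ρ
    rw [← Category.assoc, hkey ρ, zero_comp, map_zero]
  have := congrArg (fun x => x ≫ σ.inv) h0
  simpa using this

lemma part2_vanish {S : Set C} (hS : IsOrthogonalCollection k S)
    {sd d zd : C} {f : sd ⟶ d} {g : d ⟶ zd} {h : zd ⟶ sd⟦(1 : ℤ)⟧}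
    (hT : Triangle.mk f g h ∈ distTriang C)
    (hf : IsMinimalRightApprox (extClosure S) f)
    (hzd : zd ∈ rightPerp S)
    (SD : SerreData k C) (w : ℕ) (hsw : IsSwSubcat k SD (-(w : ℤ)) S)
    (H0 : ∀ s ∈ S, ∀ u : d ⟶ (s⟦1 - (w : ℤ)⟧ : C), u = 0)
    {s : C} (hs : s ∈ S) (u : zd ⟶ (s⟦1 - (w : ℤ)⟧ : C)) : u = 0 := by
  set B := shiftFunctorAdd' C (1 - (w : ℤ)) ((w : ℤ) - 1) 0 (by omega) with hB
  set E := shiftFunctorZero C ℤ with hE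
  set ub : (zd⟦(w : ℤ) - 1⟧ : C) ⟶ s := u⟦(w : ℤ) - 1⟧' ≫ B.inv.app s ≫ E.hom.app s with hub
  have hgu : g ≫ u = 0 := H0 s hs _
  have h1 : g⟦(w : ℤ) - 1⟧' ≫ ub = 0 := by
    rw [hub, ← Category.assoc, ← Functor.map_comp, hgu, Functor.map_zero, zero_comp]
  have h2 : ub = 0 := part2_inj hS hT hf hzd SD w hsw hs ub h1
  have h3 : u⟦(w : ℤ) - 1⟧' = 0 := by
    have : u⟦(w : ℤ) - 1⟧' ≫ (B.inv.app s ≫ E.hom.app s) = 0 ≫ (B.inv.app s ≫ E.hom.app s) := by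
      rw [zero_comp, ← Category.assoc] at *
      simpa [hub] using h2
    exact (cancel_mono _).1 this
  apply (shiftFunctor C ((w : ℤ) - 1)).map_injective
  rw [h3, Functor.map_zero]

end Auxiliary

/-- Properties of the decomposition triangle `s_d → d → z_d → Σs_d` for the torsion pair
`(⟨S⟩, S^⊥)`: `Hom(S, s_d) → Hom(S, d)` is an isomorphism; and if `S` is an
`𝕊_{-w}`-subcategory, then `Hom(Σ^{w-1}z_d, S) → Hom(Σ^{w-1}d, S)` is a monomorphism,
and `Hom(d, Σ^{1-w}S) = 0` implies `Hom(z_d, Σ^{1-w}S) = 0`. -/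
theorem stmt17 (S : Set C) (hS : IsOrthogonalCollection k S)
    (hff : FunctoriallyFinite (extClosure S))
    {sd d zd : C} (f : sd ⟶ d) (g : d ⟶ zd) (h : zd ⟶ sd⟦(1 : ℤ)⟧)
    (hT : Triangle.mk f g h ∈ distTriang C)
    (hf : IsMinimalRightApprox (extClosure S) f)
    (hg : IsLeftApprox (rightPerp S) g ∧ LeftMinimal g) :
    (∀ s ∈ S, Function.Bijective (fun u : (s ⟶ sd) => u ≫ f)) ∧
    ∀ (SD : SerreData k C) (w : ℕ), 1 ≤ w → IsSwSubcat k SD (-(w : ℤ)) S →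
      ((∀ s ∈ S, Function.Injective
          (fun u : (zd⟦(w : ℤ) - 1⟧ ⟶ s) => g⟦(w : ℤ) - 1⟧' ≫ u)) ∧
       ((∀ s ∈ S, ∀ u : d ⟶ s⟦1 - (w : ℤ)⟧, u = 0) →
        ∀ s ∈ S, ∀ u : zd ⟶ s⟦1 - (w : ℤ)⟧, u = 0)) := by
  have hzd : zd ∈ rightPerp S := hg.1.1
  constructor
  · intro s hs
    constructor
    · intro u₁ u₂ he
      have he' : u₁ ≫ f = u₂ ≫ f := he
      have h0 : (u₁ - u₂) ≫ f = 0 := by rw [Preadditive.sub_comp, he', sub_self]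
      exact sub_eq_zero.1 (key_inj hS hT hf hzd hs (u₁ - u₂) h0)
    · intro m
      obtain ⟨l, hl⟩ := hf.1.2 s (subset_extClosure S hs) m
      exact ⟨l, hl⟩
  · intro SD w _hw hsw
    constructor
    · intro s hs u₁ u₂ he
      have he' : g⟦(w : ℤ) - 1⟧' ≫ u₁ = g⟦(w : ℤ) - 1⟧' ≫ u₂ := he
      have h0 : g⟦(w : ℤ) - 1⟧' ≫ (u₁ - u₂) = 0 := by
        rw [Preadditive.comp_sub, he', sub_self]
      exact sub_eq_zero.1 (part2_inj hS hT hf hzd SD w hsw hs _ h0)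
    · intro H0 s hs u
      exact part2_vanish hS hT hf hzd SD w hsw H0 hs u

end SMSPaper
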